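/- Corollary of the rat-race computation: under the hypotheses above, if additionally r(z*) ≤ 1/ḡ(z*) ≤ (A+1)/(A + ε(A+1)) at some z* and ḡ(z) ≥ A/(A+1) + ε on all of (−∞, z*], then integrating backwards, either ḡ exceeds 1 at some z < z* or r(z) < 1 at some z < z* — i.e., effort above α = A/(A+1) at equilibrium forces a wealth trap. -/

import Mathlib

open Real Set

/-- Corollary of the rat-race computation: if at `z*` the return satisfies
`r z* ≤ 1/ḡ z* ≤ (A+1)/(A + ε(A+1))` and `ḡ ≥ A/(A+1) + ε` on all of
`(-∞, z*]`, then either `ḡ` exceeds `1` somewhere below `z*` or `r < 1`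
somewhere below `z*` (a wealth trap). -/
theorem rat_race_corollary
    (A ε : ℝ) (hA : 0 < A) (hε : 0 < ε)
    (gbar r : ℝ → ℝ)
    (hgbar : ∀ z, gbar z ∈ Ioo (0:ℝ) 1) (hrpos : ∀ z, 0 < r z)
    (hgdiff : Differentiable ℝ gbar) (hrdiff : Differentiable ℝ r)
    (hderiv : ∀ z, deriv r z =
      r z * (1 + deriv gbar z / gbar z) * ((A + 1) / A * gbar z - 1) / (1 - gbar z))
    (hmono : ∀ z, 0 ≤ 1 + deriv gbar z / gbar z)
    (zstar : ℝ)
    (hstar₁ : r zstar ≤ 1 / gbar zstar)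
    (hstar₂ : 1 / gbar zstar ≤ (A + 1) / (A + ε * (A + 1)))
    (hbig : ∀ z ≤ zstar, A / (A + 1) + ε ≤ gbar z) :
    (∃ z < zstar, 1 < gbar z) ∨ (∃ z < zstar, r z < 1) := by
  right
  have hA1 : (0:ℝ) < A + 1 := by linarith
  set c : ℝ := ε * (A + 1) / A with hc
  have hcpos : 0 < c := by positivity
  set φ : ℝ → ℝ := fun z => Real.log (r z) - c * Real.log (gbar z) - c * z with hφ
  have hφderiv : ∀ z, HasDerivAt φ
      (deriv r z / r z - c * (deriv gbar z / gbar z) - c) z := by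
    intro z
    have h1 : HasDerivAt (fun z => Real.log (r z)) (deriv r z / r z) z := by
      have := (Real.hasDerivAt_log (hrpos z).ne').comp z (hrdiff z).hasDerivAt
      simpa [div_eq_inv_mul, Function.comp_def] using this
    have h2 : HasDerivAt (fun z => Real.log (gbar z)) (deriv gbar z / gbar z) z := by
      have := (Real.hasDerivAt_log (hgbar z).1.ne').comp z (hgdiff z).hasDerivAt
      simpa [div_eq_inv_mul, Function.comp_def] using this
    have h3 : HasDerivAt (fun z : ℝ => c * z) c z := by
      simpa using (hasDerivAt_id z).const_mul c
    exact (h1.sub (h2.const_mul c)).sub h3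
  have key : ∀ z ≤ zstar, 0 ≤ deriv r z / r z - c * (deriv gbar z / gbar z) - c := by
    intro z hz
    have hg0 := (hgbar z).1
    have hg1 := (hgbar z).2
    have hgb := hbig z hz
    have hm := hmono z
    have hr0 := hrpos z
    set m : ℝ := 1 + deriv gbar z / gbar z with hmdef
    have hdiv : (A + 1) * (A / (A + 1)) = A := by field_simp
    have key1 : A + ε * (A + 1) ≤ (A + 1) * gbar z := by
      nlinarith [mul_le_mul_of_nonneg_left hgb hA1.le]
    have hN : c ≤ (A + 1) / A * gbar z - 1 := by
      rw [hc, div_le_iff₀ hA]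
      have heq : ((A + 1) / A * gbar z - 1) * A = (A + 1) * gbar z - A := by
        field_simp
      rw [heq]; linarith
    have h1g : 0 < 1 - gbar z := by linarith
    have hK : c ≤ ((A + 1) / A * gbar z - 1) / (1 - gbar z) := by
      rw [le_div_iff₀ h1g]
      nlinarith
    have hrr : deriv r z / r z = m * (((A + 1) / A * gbar z - 1) / (1 - gbar z)) := by
      rw [hderiv z, hmdef]
      field_simp [hr0.ne', hg0.ne', h1g.ne']
    have : deriv r z / r z - c * (deriv gbar z / gbar z) - c
        = m * (((A + 1) / A * gbar z - 1) / (1 - gbar z) - c) := by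
      rw [hrr, hmdef]; ring
    rw [this]
    exact mul_nonneg hm (by linarith)
  have hφmono : MonotoneOn φ (Iic zstar) := by
    apply monotoneOn_of_deriv_nonneg (convex_Iic zstar)
    · exact (Differentiable.continuous fun z => (hφderiv z).differentiableAt).continuousOn
    · intro z _
      exact (hφderiv z).differentiableAt.differentiableWithinAt
    · intro z hz
      rw [(hφderiv z).deriv]
      exact key z (le_of_lt (by simpa using hz))
  -- choose a point far to the left
  set z0 : ℝ := min zstar (-(φ zstar) / c) - 1 with hz0
  have hz0lt : z0 < zstar := by
    have : z0 ≤ zstar - 1 := by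
      simp only [hz0]
      have := min_le_left zstar (-(φ zstar) / c)
      linarith
    linarith
  refine ⟨z0, hz0lt, ?_⟩
  have hmono0 : φ z0 ≤ φ zstar := hφmono (le_of_lt hz0lt) (le_refl zstar) (le_of_lt hz0lt)
  have hlogg : Real.log (gbar z0) < 0 := Real.log_neg (hgbar z0).1 (hgbar z0).2
  have hcz0 : c * z0 < -(φ zstar) := by
    have h1 : z0 < -(φ zstar) / c := by
      have := min_le_right zstar (-(φ zstar) / c)
      simp only [hz0]; linarith
    calc c * z0 < c * (-(φ zstar) / c) := by
          exact (mul_lt_mul_iff_right₀ hcpos).mpr h1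
      _ = -(φ zstar) := by rw [mul_comm, div_mul_cancel₀ _ hcpos.ne']
  have hlogr : Real.log (r z0) < 0 := by
    have : φ z0 = Real.log (r z0) - c * Real.log (gbar z0) - c * z0 := rfl
    nlinarith [mul_pos hcpos (neg_pos.mpr hlogg)]
  exact (Real.log_neg_iff (hrpos z0)).mp hlogr
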